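/- arXiv:1307.5188 — 2 statements merged into one kernel-verified Lean document; each statement's English description precedes it below -/
import Mathlib

section
/- For every integer k and integers n ≥ m ≥ 1, the n-th poly-Cauchy number of the first kind satisfies C_n^(k) = Σ_{a=1}^{m} Σ_{l=0}^{a} Σ_{s=0}^{n-m+a} (-1)^s C(m+s-1, s) · ( (n-m)! / (n-m+a-s)! ) · S₁(m,a) S₁(a+1, l+1) T_{n-m+a-s}^{(a, k-l)}. -/
open PowerSeries Finset

/-- Composition `F(G(t))` of formal power series (intended for `G` with zero
constant term, in which case `coeff n (G ^ m) = 0` for `m > n` and the finite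
sum below computes the usual composition). -/
noncomputable def psComp (F G : PowerSeries ℝ) : PowerSeries ℝ :=
  PowerSeries.mk fun n => ∑ m ∈ Finset.range (n + 1),
    (PowerSeries.coeff m F) * (PowerSeries.coeff n (G ^ m))

/-- The formal power series of `log (1 + t)`. -/
noncomputable def logSeries : PowerSeries ℝ :=
  PowerSeries.mk fun n => if n = 0 then 0 else (-1) ^ (n + 1) / n

/-- The polylogarithm factorial function `Lif_k(t) = ∑_{m ≥ 0} t^m / (m! (m+1)^k)`. -/
noncomputable def Lif (k : ℤ) : PowerSeries ℝ :=
  PowerSeries.mk fun m => 1 / ((m.factorial : ℝ) * ((m : ℝ) + 1) ^ k)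

/-- The poly-Cauchy polynomial of the first kind `C_n^{(k)}(x)`, defined by
`Lif_k(log(1+t)) / (1+t)^x = ∑_{n ≥ 0} C_n^{(k)}(x) t^n / n!`, where
`(1+t)^{-x} = exp (-x · log (1+t))`. -/
noncomputable def polyCauchy (k : ℤ) (n : ℕ) (x : ℝ) : ℝ :=
  (n.factorial : ℝ) * PowerSeries.coeff n
    (psComp (Lif k) logSeries *
      psComp (PowerSeries.rescale (-x) (PowerSeries.exp ℝ)) logSeries)

/-- The (signed) Stirling numbers of the first kind `S₁(l, m)`, defined by
`(log (1+t))^m = m! ∑_{l ≥ m} S₁(l,m) t^l / l!`. -/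
noncomputable def S1 (l m : ℕ) : ℝ :=
  (l.factorial : ℝ) / (m.factorial : ℝ) * PowerSeries.coeff l (logSeries ^ m)

/-- The ordinary Bernoulli numbers, via `t/(e^t - 1) = ∑ B_n t^n/n!`;
here `(mk fun m => 1/(m+1)!)` is the series `(e^t - 1)/t`. -/
noncomputable def Bern (n : ℕ) : ℝ :=
  (n.factorial : ℝ) * PowerSeries.coeff n
    (PowerSeries.mk fun m => (1 : ℝ) / (m + 1).factorial)⁻¹

/-- The Bernoulli polynomial of order `r`, via `(t/(e^t-1))^r e^{xt} = ∑ B_n^{(r)}(x) t^n/n!`. -/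
noncomputable def bernPoly (r : ℕ) (n : ℕ) (x : ℝ) : ℝ :=
  (n.factorial : ℝ) * PowerSeries.coeff n
    (((PowerSeries.mk fun m => (1 : ℝ) / (m + 1).factorial)⁻¹) ^ r *
      PowerSeries.rescale x (PowerSeries.exp ℝ))

/-- The series `log(1+t)/t`, so that `t / log(1+t) = Dlog⁻¹`. -/
noncomputable def Dlog : PowerSeries ℝ :=
  PowerSeries.mk fun n => (-1) ^ n / ((n : ℝ) + 1)

/-- The Cauchy numbers of the first kind, via `t/log(1+t) = ∑ C_n t^n/n!`. -/
noncomputable def cauchyNum (n : ℕ) : ℝ :=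
  (n.factorial : ℝ) * PowerSeries.coeff n Dlog⁻¹

/-- The numbers `T_n^{(r,k)}`, via
`(t/log(1+t))^r · Lif_k(log(1+t)) = ∑ T_n^{(r,k)} t^n/n!`. -/
noncomputable def T (r : ℕ) (k : ℤ) (n : ℕ) : ℝ :=
  (n.factorial : ℝ) * PowerSeries.coeff n (Dlog⁻¹ ^ r * psComp (Lif k) logSeries)

/-- The rising factorial `x^{(m)} = x (x+1) ⋯ (x+m-1)`. -/
noncomputable def risingFactorial (x : ℝ) (m : ℕ) : ℝ :=
  ∏ i ∈ Finset.range m, (x + i)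

/-- Carlitz's polynomials `β_n^{(r)}(x)`, via `(t/log(1+t))^r (1+t)^x = ∑ β_n^{(r)}(x) t^n/n!`,
where `(1+t)^x = exp (x log (1+t))`. -/
noncomputable def carlitz (r : ℕ) (n : ℕ) (x : ℝ) : ℝ :=
  (n.factorial : ℝ) * PowerSeries.coeff n
    (Dlog⁻¹ ^ r * psComp (PowerSeries.rescale x (PowerSeries.exp ℝ)) logSeries)

/- ============  auxiliary development  ============ -/

noncomputable def Q (m : ℕ) : PowerSeries ℝ :=
  PowerSeries.mk fun s => (-1 : ℝ) ^ s * ((m + s - 1).choose s : ℝ)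

noncomputable def desc (p a : ℕ) : ℝ := ∏ i ∈ Finset.range a, ((p : ℝ) - (i : ℝ))

lemma coeff_Q (m s : ℕ) :
    PowerSeries.coeff s (Q m) = (-1 : ℝ) ^ s * ((m + s - 1).choose s : ℝ) :=
  PowerSeries.coeff_mk _ _

lemma coeff_one_add_X_mul (F : PowerSeries ℝ) (j : ℕ) :
    PowerSeries.coeff (j + 1) ((1 + X) * F)
      = PowerSeries.coeff (j + 1) F + PowerSeries.coeff j F := by
  rw [add_mul, one_mul, map_add, coeff_succ_X_mul]

lemma coeff_zero_one_add_X_mul (F : PowerSeries ℝ) :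
    PowerSeries.coeff 0 ((1 + X) * F) = PowerSeries.coeff 0 F := by
  rw [add_mul, one_mul, map_add, coeff_zero_X_mul, add_zero]

lemma one_add_X_mul_Q_succ (m : ℕ) : (1 + X) * Q (m + 1) = Q m := by
  ext j
  cases j with
  | zero => simp [coeff_zero_one_add_X_mul, coeff_Q]
  | succ j =>
      rw [coeff_one_add_X_mul, coeff_Q, coeff_Q, coeff_Q]
      have h1 : m + 1 + (j + 1) - 1 = (m + j) + 1 := by omega
      have h2 : m + 1 + j - 1 = m + j := by omega
      have h3 : m + (j + 1) - 1 = m + j := by omega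
      rw [h1, h2, h3, Nat.choose_succ_succ (m + j) j]
      push_cast
      ring

lemma Q_zero : Q 0 = 1 := by
  ext j
  cases j with
  | zero => simp [coeff_Q]
  | succ j =>
      rw [coeff_Q, PowerSeries.coeff_one]
      have : (0 + (j + 1) - 1).choose (j + 1) = 0 :=
        Nat.choose_eq_zero_of_lt (by omega)
      simp [this]

lemma one_add_X_mul_Q_one : (1 + X) * Q 1 = 1 := by
  rw [one_add_X_mul_Q_succ 0, Q_zero]

lemma Q_mul_Q_one (m : ℕ) : Q m * Q 1 = Q (m + 1) := by
  have h := one_add_X_mul_Q_succ m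
  calc Q m * Q 1 = ((1 + X) * Q (m + 1)) * Q 1 := by rw [h]
    _ = Q (m + 1) * ((1 + X) * Q 1) := by ring
    _ = Q (m + 1) := by rw [one_add_X_mul_Q_one, mul_one]

lemma logSeries_eq : logSeries = X * Dlog := by
  ext n
  cases n with
  | zero => simp [logSeries, Dlog]
  | succ n =>
      rw [coeff_succ_X_mul]
      simp only [logSeries, Dlog, PowerSeries.coeff_mk, Nat.succ_ne_zero, if_false]
      push_cast
      rw [pow_succ, pow_succ]
      ring

lemma constantCoeff_Dlog : PowerSeries.constantCoeff Dlog = 1 := by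
  rw [← PowerSeries.coeff_zero_eq_constantCoeff_apply]
  simp [Dlog]

lemma Dlog_mul_inv : Dlog * Dlog⁻¹ = 1 :=
  PowerSeries.mul_inv_cancel _ (by rw [constantCoeff_Dlog]; norm_num)

lemma Dinv_pow_mul_L_pow {a p : ℕ} (h : a ≤ p) :
    Dlog⁻¹ ^ a * logSeries ^ p = X ^ a * logSeries ^ (p - a) := by
  have hp : logSeries ^ p = logSeries ^ (p - a) * (X ^ a * Dlog ^ a) := by
    conv_lhs => rw [show p = (p - a) + a from (Nat.sub_add_cancel h).symm]
    rw [pow_add]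
    congr 1
    rw [logSeries_eq, mul_pow]
  have h1 : Dlog ^ a * Dlog⁻¹ ^ a = 1 := by
    rw [← mul_pow, Dlog_mul_inv, one_pow]
  calc Dlog⁻¹ ^ a * logSeries ^ p
      = X ^ a * logSeries ^ (p - a) * (Dlog ^ a * Dlog⁻¹ ^ a) := by rw [hp]; ring
    _ = X ^ a * logSeries ^ (p - a) := by rw [h1, mul_one]

lemma coeff_L_pow_eq_zero {N p : ℕ} (h : N < p) :
    PowerSeries.coeff N (logSeries ^ p) = 0 := by
  rw [logSeries_eq, mul_pow, PowerSeries.coeff_X_pow_mul']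
  simp [Nat.not_le.mpr h]

lemma coeff_Dinv_L_pow_eq_zero {N a p : ℕ} (h : N < p) :
    PowerSeries.coeff N (Dlog⁻¹ ^ a * logSeries ^ p) = 0 := by
  rw [logSeries_eq, mul_pow,
    show Dlog⁻¹ ^ a * (X ^ p * Dlog ^ p) = X ^ p * (Dlog⁻¹ ^ a * Dlog ^ p) by ring,
    PowerSeries.coeff_X_pow_mul']
  simp [Nat.not_le.mpr h]

lemma derivative_logSeries : d⁄dX ℝ logSeries = Q 1 := by
  ext j
  rw [PowerSeries.coeff_derivative, coeff_Q]
  simp only [logSeries, PowerSeries.coeff_mk, Nat.succ_ne_zero, if_false]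
  have h1 : (1 + j - 1).choose j = 1 := by simp
  rw [h1]
  have hj : ((j : ℝ) + 1) ≠ 0 := by positivity
  push_cast
  rw [pow_succ, pow_succ]
  field_simp

lemma one_add_X_mul_dL : (1 + X) * d⁄dX ℝ logSeries = 1 := by
  rw [derivative_logSeries, one_add_X_mul_Q_one]

lemma derivative_Q (m : ℕ) : d⁄dX ℝ (Q m) = (-(m : ℝ)) • Q (m + 1) := by
  ext j
  rw [PowerSeries.coeff_derivative, map_smul, coeff_Q, coeff_Q, smul_eq_mul]
  have h1 : m + (j + 1) - 1 = m + j := by omega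
  have h2 : m + 1 + j - 1 = m + j := by omega
  rw [h1, h2]
  have h3 := Nat.choose_succ_right_eq (m + j) j
  have h4 : m + j - j = m := by omega
  rw [h4] at h3
  have h5 : ((m + j).choose (j + 1) : ℝ) * ((j : ℝ) + 1)
      = ((m + j).choose j : ℝ) * (m : ℝ) := by exact_mod_cast congrArg (Nat.cast : ℕ → ℝ) h3
  linear_combination (-(-1:ℝ)^j) * h5


lemma coeff_iterate_derivative (m : ℕ) :
    ∀ (j : ℕ) (F : PowerSeries ℝ),
      PowerSeries.coeff j ((d⁄dX ℝ)^[m] F)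
        = ((j + m).factorial / j.factorial : ℝ) * PowerSeries.coeff (j + m) F := by
  induction m with
  | zero =>
      intro j F
      simp only [Function.iterate_zero, id_eq, Nat.add_zero]
      rw [div_self (by exact_mod_cast j.factorial_ne_zero), one_mul]
  | succ m ih =>
      intro j F
      rw [Function.iterate_succ_apply, ih, PowerSeries.coeff_derivative]
      have h1 : j + (m + 1) = (j + m) + 1 := by omega
      rw [h1, Nat.factorial_succ]
      have h2 : (j.factorial : ℝ) ≠ 0 := by exact_mod_cast j.factorial_ne_zero
      push_cast
      field_simp

lemma one_add_X_mul_derivative_L_pow (q : ℕ) :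
    (1 + X) * d⁄dX ℝ (logSeries ^ (q + 1)) = ((q : ℝ) + 1) • logSeries ^ q := by
  rw [Derivation.leibniz_pow]
  have h1 : (q + 1) • logSeries ^ (q + 1 - 1) • d⁄dX ℝ logSeries
      = ((q : ℝ) + 1) • (logSeries ^ q * d⁄dX ℝ logSeries) := by
    rw [Nat.add_sub_cancel, smul_eq_mul]
    rw [show ((q:ℝ)+1) = ((q+1 : ℕ) : ℝ) by push_cast; ring, Nat.cast_smul_eq_nsmul]
  rw [h1, mul_smul_comm]
  congr 1
  rw [show (1 + X) * (logSeries ^ q * d⁄dX ℝ logSeries)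
      = logSeries ^ q * ((1 + X) * d⁄dX ℝ logSeries) by ring, one_add_X_mul_dL, mul_one]

lemma c_rec (q l : ℕ) :
    ((q : ℝ) + 1) * PowerSeries.coeff (q + 1) (logSeries ^ (l + 1))
      + (q : ℝ) * PowerSeries.coeff q (logSeries ^ (l + 1))
    = ((l : ℝ) + 1) * PowerSeries.coeff q (logSeries ^ l) := by
  have h := congrArg (PowerSeries.coeff q) (one_add_X_mul_derivative_L_pow l)
  rw [map_smul, smul_eq_mul] at h
  cases q with
  | zero =>
      rw [coeff_zero_one_add_X_mul, PowerSeries.coeff_derivative] at h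
      push_cast
      push_cast at h
      linarith
  | succ q =>
      rw [coeff_one_add_X_mul, PowerSeries.coeff_derivative,
        PowerSeries.coeff_derivative] at h
      push_cast
      push_cast at h
      linarith

lemma coeff_L_pow_zero_left (q : ℕ) :
    PowerSeries.coeff (q + 1) (logSeries ^ (0 : ℕ)) = 0 := by
  rw [pow_zero, PowerSeries.coeff_one]
  simp

lemma key2 (q : ℕ) (x : ℝ) :
    ∑ l ∈ Finset.range (q + 1),
        x ^ l / (l.factorial : ℝ) * PowerSeries.coeff q (logSeries ^ l)
      = (∏ i ∈ Finset.range q, (x - (i : ℝ))) / (q.factorial : ℝ) := by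
  induction q with
  | zero => simp
  | succ q ih =>
      have hq1 : ((q : ℝ) + 1) ≠ 0 := by positivity
      have hrec : ∀ l : ℕ,
          PowerSeries.coeff (q + 1) (logSeries ^ (l + 1))
            = (((l : ℝ) + 1) * PowerSeries.coeff q (logSeries ^ l)
                - (q : ℝ) * PowerSeries.coeff q (logSeries ^ (l + 1))) / ((q : ℝ) + 1) := by
        intro l
        have h := c_rec q l
        field_simp
        linarith
      have hq0 : (q : ℝ) * PowerSeries.coeff q (logSeries ^ (0 : ℕ)) = 0 := by
        cases q with
        | zero => simp
        | succ q => rw [coeff_L_pow_zero_left]; ring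
      have step1 : ∑ l ∈ Finset.range (q + 2),
          x ^ l / (l.factorial : ℝ) * PowerSeries.coeff (q + 1) (logSeries ^ l)
          = ∑ l ∈ Finset.range (q + 1),
              x ^ (l + 1) / ((l + 1).factorial : ℝ)
                * PowerSeries.coeff (q + 1) (logSeries ^ (l + 1)) := by
        rw [Finset.sum_range_succ']
        rw [coeff_L_pow_zero_left q]
        simp
      have step2 : ∑ l ∈ Finset.range (q + 1),
          x ^ (l + 1) / ((l + 1).factorial : ℝ)
            * PowerSeries.coeff (q + 1) (logSeries ^ (l + 1))
          = (x * ∑ l ∈ Finset.range (q + 1),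
              x ^ l / (l.factorial : ℝ) * PowerSeries.coeff q (logSeries ^ l)
            - (q : ℝ) * ∑ l ∈ Finset.range (q + 1),
              x ^ (l + 1) / ((l + 1).factorial : ℝ)
                * PowerSeries.coeff q (logSeries ^ (l + 1))) / ((q : ℝ) + 1) := by
        rw [Finset.mul_sum, Finset.mul_sum, ← Finset.sum_sub_distrib, Finset.sum_div]
        apply Finset.sum_congr rfl
        intro l _
        rw [hrec l, Nat.factorial_succ]
        have hl : ((l : ℝ) + 1) ≠ 0 := by positivity
        have hlf : ((l.factorial : ℝ)) ≠ 0 := by exact_mod_cast l.factorial_ne_zero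
        push_cast
        field_simp
        ring
      have step3 : ∑ l ∈ Finset.range (q + 1),
          x ^ (l + 1) / ((l + 1).factorial : ℝ)
            * PowerSeries.coeff q (logSeries ^ (l + 1))
          = (∏ i ∈ Finset.range q, (x - (i : ℝ))) / (q.factorial : ℝ)
            - x ^ 0 / ((0 : ℕ).factorial : ℝ) * PowerSeries.coeff q (logSeries ^ (0:ℕ)) := by
        have h4 : ∑ l ∈ Finset.range (q + 2),
            x ^ l / (l.factorial : ℝ) * PowerSeries.coeff q (logSeries ^ l)
            = (∏ i ∈ Finset.range q, (x - (i : ℝ))) / (q.factorial : ℝ) := by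
          rw [Finset.sum_range_succ, ih, coeff_L_pow_eq_zero (by omega)]
          ring
        rw [Finset.sum_range_succ'] at h4
        linarith [h4]
      have hcoe : (q:ℝ) * (x ^ 0 / ((0:ℕ).factorial : ℝ) * PowerSeries.coeff q (logSeries ^ (0:ℕ))) = 0 := by
        simp only [pow_zero, Nat.factorial_zero, Nat.cast_one, div_one, one_mul]
        exact hq0
      simp only [pow_zero, Nat.factorial_zero, Nat.cast_one, div_one, one_mul] at step3
      rw [step1, step2, step3, ih, Finset.prod_range_succ, Nat.factorial_succ]
      push_cast
      rw [mul_comm ((q:ℝ) + 1) (q.factorial : ℝ), ← div_div]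
      congr 1
      simp only [pow_zero] at hq0
      linear_combination hq0

lemma desc_succ (p a : ℕ) : desc p (a + 1) = desc p a * ((p : ℝ) - a) :=
  Finset.prod_range_succ _ _

lemma desc_eq_zero_of_lt {p a : ℕ} (h : p < a) : desc p a = 0 :=
  Finset.prod_eq_zero (Finset.mem_range.mpr h) (by simp)

lemma desc_mul_natsub (p a : ℕ) : desc p a * ((p - a : ℕ) : ℝ) = desc p (a + 1) := by
  rcases le_or_gt a p with h | h
  · rw [desc_succ, Nat.cast_sub h]
  · rw [desc_eq_zero_of_lt h, desc_eq_zero_of_lt (by omega), zero_mul]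

lemma S1_sum_eq_desc (a p : ℕ) :
    ∑ l ∈ Finset.range (a + 1), S1 (a + 1) (l + 1) * ((p : ℝ) + 1) ^ l = desc p a := by
  have hk := key2 (a + 1) ((p : ℝ) + 1)
  rw [Finset.sum_range_succ'] at hk
  rw [coeff_L_pow_zero_left a] at hk
  simp only [pow_zero, Nat.factorial_zero, Nat.cast_one, div_one, one_mul, mul_zero,
    add_zero] at hk
  have hp1 : ((p : ℝ) + 1) ≠ 0 := by positivity
  have hprod : ∏ i ∈ Finset.range (a + 1), ((p : ℝ) + 1 - i) = ((p : ℝ) + 1) * desc p a := by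
    rw [Finset.prod_range_succ']
    simp only [Nat.cast_zero, sub_zero]
    rw [mul_comm]
    congr 1
    apply Finset.prod_congr rfl
    intro i _
    push_cast
    ring
  have haf : (((a + 1).factorial : ℝ)) ≠ 0 := by exact_mod_cast (a + 1).factorial_ne_zero
  have key : ((p : ℝ) + 1) * ∑ l ∈ Finset.range (a + 1),
      S1 (a + 1) (l + 1) * ((p : ℝ) + 1) ^ l = ((p : ℝ) + 1) * desc p a := by
    rw [Finset.mul_sum]
    have : ∀ l ∈ Finset.range (a + 1),
        ((p : ℝ) + 1) * (S1 (a + 1) (l + 1) * ((p : ℝ) + 1) ^ l)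
          = ((a + 1).factorial : ℝ) * (((p : ℝ) + 1) ^ (l + 1) / ((l + 1).factorial : ℝ)
              * PowerSeries.coeff (a + 1) (logSeries ^ (l + 1))) := by
      intro l _
      rw [S1]
      rw [pow_succ]
      have : (((l + 1).factorial : ℝ)) ≠ 0 := by exact_mod_cast (l + 1).factorial_ne_zero
      field_simp
      ring
    rw [Finset.sum_congr rfl this, ← Finset.mul_sum, hk, hprod]
    field_simp
  exact mul_left_cancel₀ hp1 key

lemma S1_zero_zero : S1 0 0 = 1 := by simp [S1]

lemma S1_succ_zero (m : ℕ) : S1 (m + 1) 0 = 0 := by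
  simp [S1, PowerSeries.coeff_one]

lemma S1_eq_zero_of_lt {m a : ℕ} (h : m < a) : S1 m a = 0 := by
  rw [S1, coeff_L_pow_eq_zero h, mul_zero]

lemma mul_S1_zero (m : ℕ) : (m : ℝ) * S1 m 0 = 0 := by
  cases m with
  | zero => simp
  | succ m => rw [S1_succ_zero]; ring

lemma S1_succ_succ (m b : ℕ) :
    S1 (m + 1) (b + 1) = S1 m b - (m : ℝ) * S1 m (b + 1) := by
  have h := c_rec m b
  simp only [S1]
  have h1 : (((m + 1).factorial : ℝ)) = ((m : ℝ) + 1) * (m.factorial : ℝ) := by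
    rw [Nat.factorial_succ]; push_cast; ring
  have h2 : (((b + 1).factorial : ℝ)) = ((b : ℝ) + 1) * (b.factorial : ℝ) := by
    rw [Nat.factorial_succ]; push_cast; ring
  rw [h1, h2]
  have hm : ((m : ℝ) + 1) ≠ 0 := by positivity
  have hb : ((b : ℝ) + 1) ≠ 0 := by positivity
  have hmf : ((m.factorial : ℝ)) ≠ 0 := by exact_mod_cast m.factorial_ne_zero
  have hbf : ((b.factorial : ℝ)) ≠ 0 := by exact_mod_cast b.factorial_ne_zero
  field_simp
  linear_combination ((1:ℝ)) * h

lemma derivative_C_mul (r : ℝ) (F : PowerSeries ℝ) :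
    d⁄dX ℝ (PowerSeries.C r * F) = PowerSeries.C r * d⁄dX ℝ F := by
  rw [Derivation.leibniz, PowerSeries.derivative_C, smul_eq_mul, smul_eq_mul, mul_zero,
    add_zero]

lemma derivative_L_pow (q : ℕ) :
    d⁄dX ℝ (logSeries ^ q)
      = PowerSeries.C (q : ℝ) * (logSeries ^ (q - 1) * Q 1) := by
  rw [Derivation.leibniz_pow, derivative_logSeries, smul_eq_mul,
    ← Nat.cast_smul_eq_nsmul ℝ, PowerSeries.smul_eq_C_mul]

lemma fdb (m p : ℕ) :
    (d⁄dX ℝ)^[m] (logSeries ^ p)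
      = Q m * ∑ a ∈ Finset.range (m + 1),
          PowerSeries.C (S1 m a * desc p a) * logSeries ^ (p - a) := by
  induction m with
  | zero =>
      simp [Q_zero, S1_zero_zero, desc]
  | succ m ih =>
      rw [Function.iterate_succ_apply', ih, Derivation.leibniz, smul_eq_mul, smul_eq_mul,
        derivative_Q, PowerSeries.smul_eq_C_mul, map_sum]
      have hterm : ∀ a ∈ Finset.range (m + 1),
          d⁄dX ℝ (PowerSeries.C (S1 m a * desc p a) * logSeries ^ (p - a))
            = PowerSeries.C (S1 m a * desc p (a + 1))
                * (logSeries ^ (p - (a + 1)) * Q 1) := by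
        intro a _
        rw [derivative_C_mul, derivative_L_pow, ← mul_assoc, ← map_mul, Nat.sub_sub]
        congr 2
        rw [mul_assoc, desc_mul_natsub]
      rw [Finset.sum_congr rfl hterm]
      have lhs1 : Q m * ∑ a ∈ Finset.range (m + 1),
          PowerSeries.C (S1 m a * desc p (a + 1)) * (logSeries ^ (p - (a + 1)) * Q 1)
          = ∑ a ∈ Finset.range (m + 1),
              PowerSeries.C (S1 m a * desc p (a + 1))
                * (Q (m + 1) * logSeries ^ (p - (a + 1))) := by
        rw [Finset.mul_sum]
        apply Finset.sum_congr rfl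
        intro a _
        rw [show Q (m + 1) = Q m * Q 1 from (Q_mul_Q_one m).symm]
        ring
      have lhs2 : (∑ a ∈ Finset.range (m + 1),
            PowerSeries.C (S1 m a * desc p a) * logSeries ^ (p - a))
            * (PowerSeries.C (-(m : ℝ)) * Q (m + 1))
          = ∑ a ∈ Finset.range (m + 1),
              PowerSeries.C (-(m : ℝ) * S1 m a * desc p a)
                * (Q (m + 1) * logSeries ^ (p - a)) := by
        rw [Finset.sum_mul]
        apply Finset.sum_congr rfl
        intro a _
        simp only [map_mul, map_neg]
        ring
      rw [lhs1, lhs2]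
      have lhs2' : ∑ a ∈ Finset.range (m + 1),
            PowerSeries.C (-(m : ℝ) * S1 m a * desc p a)
              * (Q (m + 1) * logSeries ^ (p - a))
          = ∑ a ∈ Finset.range (m + 1),
              PowerSeries.C (-(m : ℝ) * S1 m (a + 1) * desc p (a + 1))
                * (Q (m + 1) * logSeries ^ (p - (a + 1))) := by
        rw [Finset.sum_range_succ', Finset.sum_range_succ]
        have hf : -(m : ℝ) * S1 m 0 * desc p 0 = 0 := by
          linear_combination (-(desc p 0)) * mul_S1_zero m
        have hg : -(m : ℝ) * S1 m (m + 1) * desc p (m + 1) = 0 := by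
          rw [S1_eq_zero_of_lt (by omega)]; ring
        rw [hf, hg, map_zero, zero_mul, zero_mul, add_zero]
      rw [lhs2']
      rw [← Finset.sum_add_distrib]
      conv_rhs => rw [Finset.mul_sum, Finset.sum_range_succ']
      have hzero : Q (m + 1) * (PowerSeries.C (S1 (m + 1) 0 * desc p 0)
          * logSeries ^ (p - 0)) = 0 := by
        rw [S1_succ_zero, zero_mul, map_zero, zero_mul, mul_zero]
      rw [hzero, add_zero]
      apply Finset.sum_congr rfl
      intro a _
      rw [← add_mul, ← map_add]
      have hs : S1 m a * desc p (a + 1) + -(m : ℝ) * S1 m (a + 1) * desc p (a + 1)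
          = S1 (m + 1) (a + 1) * desc p (a + 1) := by
        rw [S1_succ_succ]; ring
      rw [hs]
      ring

lemma coeff_Q_mul (m N : ℕ) (W : PowerSeries ℝ) :
    PowerSeries.coeff N (Q m * W)
      = ∑ s ∈ Finset.range (N + 1),
          (-1 : ℝ) ^ s * ((m + s - 1).choose s : ℝ) * PowerSeries.coeff (N - s) W := by
  rw [PowerSeries.coeff_mul, Finset.Nat.sum_antidiagonal_eq_sum_range_succ_mk]
  apply Finset.sum_congr rfl
  intro s _
  rw [coeff_Q]

lemma per_p (n m p : ℕ) (hm : 1 ≤ m) (hmn : m ≤ n) :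
    (n.factorial : ℝ) * PowerSeries.coeff n (logSeries ^ p)
      = ((n - m).factorial : ℝ) * ∑ a ∈ Finset.Icc 1 m,
          S1 m a * desc p a
            * PowerSeries.coeff (n - m + a) (Q m * (Dlog⁻¹ ^ a * logSeries ^ p)) := by
  have hc := congrArg (PowerSeries.coeff (n - m)) (fdb m p)
  rw [coeff_iterate_derivative, Nat.sub_add_cancel hmn, Finset.mul_sum, map_sum] at hc
  have hterm : ∀ a ∈ Finset.range (m + 1),
      PowerSeries.coeff (n - m)
          (Q m * (PowerSeries.C (S1 m a * desc p a) * logSeries ^ (p - a)))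
        = S1 m a * desc p a
            * PowerSeries.coeff (n - m + a) (Q m * (Dlog⁻¹ ^ a * logSeries ^ p)) := by
    intro a _
    rcases le_or_gt a p with h | h
    · rw [Dinv_pow_mul_L_pow h,
        show Q m * (X ^ a * logSeries ^ (p - a)) = X ^ a * (Q m * logSeries ^ (p - a)) by
          ring,
        PowerSeries.coeff_X_pow_mul,
        show Q m * (PowerSeries.C (S1 m a * desc p a) * logSeries ^ (p - a))
            = PowerSeries.C (S1 m a * desc p a) * (Q m * logSeries ^ (p - a)) by ring,
        PowerSeries.coeff_C_mul]
    · rw [desc_eq_zero_of_lt h]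
      simp
  rw [Finset.sum_congr rfl hterm] at hc
  have hsplit : ∑ a ∈ Finset.range (m + 1),
      S1 m a * desc p a
        * PowerSeries.coeff (n - m + a) (Q m * (Dlog⁻¹ ^ a * logSeries ^ p))
      = ∑ a ∈ Finset.Icc 1 m,
          S1 m a * desc p a
            * PowerSeries.coeff (n - m + a) (Q m * (Dlog⁻¹ ^ a * logSeries ^ p)) := by
    rw [Finset.sum_range_succ']
    have h0 : S1 m 0 = 0 := by
      obtain ⟨m', rfl⟩ : ∃ m', m = m' + 1 := ⟨m - 1, by omega⟩
      exact S1_succ_zero m'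
    rw [h0, zero_mul, zero_mul, add_zero]
    rw [show Finset.Icc 1 m = Finset.Ico 1 (m + 1) from (Finset.Ico_add_one_right_eq_Icc 1 m),
      Finset.sum_Ico_eq_sum_range]
    apply Finset.sum_congr (by norm_num)
    intro i _
    rw [add_comm 1 i]
  rw [hsplit] at hc
  have hfne : (((n - m).factorial : ℝ)) ≠ 0 := by exact_mod_cast (n - m).factorial_ne_zero
  rw [← hc]
  field_simp

lemma per_p_full (n m p : ℕ) (hm : 1 ≤ m) (hmn : m ≤ n) :
    (n.factorial : ℝ) * PowerSeries.coeff n (logSeries ^ p)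
      = ((n - m).factorial : ℝ) * ∑ a ∈ Finset.Icc 1 m, ∑ l ∈ Finset.range (a + 1),
          ∑ s ∈ Finset.range (n - m + a + 1),
            (S1 (a + 1) (l + 1) * ((p : ℝ) + 1) ^ l)
              * (S1 m a * ((-1 : ℝ) ^ s * ((m + s - 1).choose s : ℝ)
                  * PowerSeries.coeff (n - m + a - s) (Dlog⁻¹ ^ a * logSeries ^ p))) := by
  rw [per_p n m p hm hmn]
  congr 1
  apply Finset.sum_congr rfl
  intro a _
  symm
  calc ∑ l ∈ Finset.range (a + 1), ∑ s ∈ Finset.range (n - m + a + 1),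
        (S1 (a + 1) (l + 1) * ((p : ℝ) + 1) ^ l)
          * (S1 m a * ((-1 : ℝ) ^ s * ((m + s - 1).choose s : ℝ)
              * PowerSeries.coeff (n - m + a - s) (Dlog⁻¹ ^ a * logSeries ^ p)))
      = ∑ l ∈ Finset.range (a + 1), (S1 (a + 1) (l + 1) * ((p : ℝ) + 1) ^ l)
          * (S1 m a * ∑ s ∈ Finset.range (n - m + a + 1),
              (-1 : ℝ) ^ s * ((m + s - 1).choose s : ℝ)
                * PowerSeries.coeff (n - m + a - s) (Dlog⁻¹ ^ a * logSeries ^ p)) := by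
        apply Finset.sum_congr rfl
        intro l _
        rw [Finset.mul_sum, Finset.mul_sum]
    _ = (∑ l ∈ Finset.range (a + 1), S1 (a + 1) (l + 1) * ((p : ℝ) + 1) ^ l)
          * (S1 m a * PowerSeries.coeff (n - m + a)
              (Q m * (Dlog⁻¹ ^ a * logSeries ^ p))) := by
        rw [← coeff_Q_mul, ← Finset.sum_mul]
    _ = S1 m a * desc p a
          * PowerSeries.coeff (n - m + a) (Q m * (Dlog⁻¹ ^ a * logSeries ^ p)) := by
        rw [S1_sum_eq_desc]
        ring

lemma coeff_mul_psComp (A F : PowerSeries ℝ) (N : ℕ) :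
    PowerSeries.coeff N (A * psComp F logSeries)
      = ∑ p ∈ Finset.range (N + 1),
          PowerSeries.coeff p F * PowerSeries.coeff N (A * logSeries ^ p) := by
  rw [PowerSeries.coeff_mul]
  have h1 : ∀ ij ∈ Finset.HasAntidiagonal.antidiagonal N,
      PowerSeries.coeff ij.1 A * PowerSeries.coeff ij.2 (psComp F logSeries)
        = ∑ p ∈ Finset.range (N + 1), PowerSeries.coeff p F
            * (PowerSeries.coeff ij.1 A * PowerSeries.coeff ij.2 (logSeries ^ p)) := by
    intro ij hij
    have hj : ij.2 ≤ N := Finset.HasAntidiagonal.antidiagonal.snd_le hij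
    rw [psComp, PowerSeries.coeff_mk, Finset.mul_sum]
    calc ∑ p ∈ Finset.range (ij.2 + 1),
          PowerSeries.coeff ij.1 A
            * (PowerSeries.coeff p F * PowerSeries.coeff ij.2 (logSeries ^ p))
        = ∑ p ∈ Finset.range (ij.2 + 1), PowerSeries.coeff p F
            * (PowerSeries.coeff ij.1 A * PowerSeries.coeff ij.2 (logSeries ^ p)) := by
          apply Finset.sum_congr rfl
          intro p _
          ring
      _ = ∑ p ∈ Finset.range (N + 1), PowerSeries.coeff p F
            * (PowerSeries.coeff ij.1 A * PowerSeries.coeff ij.2 (logSeries ^ p)) := by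
          apply Finset.sum_subset (Finset.range_subset_range.mpr (by omega))
          intro p _ hnp
          rw [coeff_L_pow_eq_zero (by
            have := Finset.mem_range.not.mp hnp
            omega), mul_zero, mul_zero]
  rw [Finset.sum_congr rfl h1, Finset.sum_comm]
  apply Finset.sum_congr rfl
  intro p _
  rw [← Finset.mul_sum, PowerSeries.coeff_mul]

lemma T_eq (a : ℕ) (κ : ℤ) (N : ℕ) :
    T a κ N = (N.factorial : ℝ) * ∑ p ∈ Finset.range (N + 1),
        1 / ((p.factorial : ℝ) * ((p : ℝ) + 1) ^ κ)
          * PowerSeries.coeff N (Dlog⁻¹ ^ a * logSeries ^ p) := by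
  rw [T, coeff_mul_psComp]
  congr 1
  apply Finset.sum_congr rfl
  intro p _
  rw [Lif, PowerSeries.coeff_mk]

lemma psComp_one_log : psComp (PowerSeries.rescale (-(0 : ℝ)) (PowerSeries.exp ℝ)) logSeries
    = 1 := by
  have h : PowerSeries.rescale (-(0 : ℝ)) (PowerSeries.exp ℝ) = 1 := by
    rw [neg_zero, PowerSeries.rescale_zero]
    simp [PowerSeries.constantCoeff_exp]
  rw [h]
  ext n
  rw [psComp, PowerSeries.coeff_mk]
  rw [Finset.sum_eq_single_of_mem 0 (Finset.mem_range.mpr (by omega))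
    (fun b _ hb => by rw [PowerSeries.coeff_one, if_neg hb, zero_mul])]
  rw [pow_zero, PowerSeries.coeff_one, if_pos rfl, one_mul]

lemma polyCauchy_eq (k : ℤ) (n : ℕ) :
    polyCauchy k n 0 = (n.factorial : ℝ) * ∑ p ∈ Finset.range (n + 1),
        1 / ((p.factorial : ℝ) * ((p : ℝ) + 1) ^ k)
          * PowerSeries.coeff n (logSeries ^ p) := by
  rw [polyCauchy, psComp_one_log, mul_one, ← one_mul (psComp (Lif k) logSeries),
    coeff_mul_psComp]
  congr 1
  apply Finset.sum_congr rfl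
  intro p _
  rw [Lif, PowerSeries.coeff_mk, one_mul]


/-- Lemma 7 of the paper. -/
theorem polyCauchyNumber_eq_T_triple_sum (k : ℤ) (n m : ℕ) (hm : 1 ≤ m) (hmn : m ≤ n) :
    polyCauchy k n 0 =
      ∑ a ∈ Finset.Icc 1 m, ∑ l ∈ Finset.range (a + 1),
        ∑ s ∈ Finset.range (n - m + a + 1),
          (-1 : ℝ) ^ s * ((m + s - 1).choose s : ℝ) *
            (((n - m).factorial : ℝ) / ((n - m + a - s).factorial : ℝ)) *
            S1 m a * S1 (a + 1) (l + 1) * T a (k - l) (n - m + a - s) := by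
  have hLHS : polyCauchy k n 0 = ∑ p ∈ Finset.range (n + 1), ∑ a ∈ Finset.Icc 1 m,
      ∑ l ∈ Finset.range (a + 1), ∑ s ∈ Finset.range (n - m + a + 1),
        1 / ((p.factorial : ℝ) * ((p : ℝ) + 1) ^ k) * (((n - m).factorial : ℝ) *
          ((S1 (a + 1) (l + 1) * ((p : ℝ) + 1) ^ l)
            * (S1 m a * ((-1 : ℝ) ^ s * ((m + s - 1).choose s : ℝ)
                * PowerSeries.coeff (n - m + a - s) (Dlog⁻¹ ^ a * logSeries ^ p))))) := by
    rw [polyCauchy_eq, Finset.mul_sum]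
    apply Finset.sum_congr rfl
    intro p _
    rw [show (n.factorial : ℝ) * (1 / ((p.factorial : ℝ) * ((p : ℝ) + 1) ^ k)
          * PowerSeries.coeff n (logSeries ^ p))
        = 1 / ((p.factorial : ℝ) * ((p : ℝ) + 1) ^ k)
          * ((n.factorial : ℝ) * PowerSeries.coeff n (logSeries ^ p)) by ring,
      per_p_full n m p hm hmn]
    simp only [Finset.mul_sum]
  have hstep : ∀ a ∈ Finset.Icc 1 m, ∀ l ∈ Finset.range (a + 1),
      ∀ s ∈ Finset.range (n - m + a + 1),
      (-1 : ℝ) ^ s * ((m + s - 1).choose s : ℝ) *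
          (((n - m).factorial : ℝ) / ((n - m + a - s).factorial : ℝ)) *
          S1 m a * S1 (a + 1) (l + 1) * T a (k - l) (n - m + a - s)
        = ∑ p ∈ Finset.range (n + 1),
            1 / ((p.factorial : ℝ) * ((p : ℝ) + 1) ^ k) * (((n - m).factorial : ℝ) *
              ((S1 (a + 1) (l + 1) * ((p : ℝ) + 1) ^ l)
                * (S1 m a * ((-1 : ℝ) ^ s * ((m + s - 1).choose s : ℝ)
                    * PowerSeries.coeff (n - m + a - s)
                        (Dlog⁻¹ ^ a * logSeries ^ p))))) := by
    intro a ha l hl s hs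
    have ham : a ≤ m := (Finset.mem_Icc.mp ha).2
    have hsle : s ≤ n - m + a := by have := Finset.mem_range.mp hs; omega
    rw [T_eq]
    rw [Finset.sum_subset (Finset.range_subset_range.mpr (show n - m + a - s + 1 ≤ n + 1 by omega))
      (fun p _ hnp => by
        rw [coeff_Dinv_L_pow_eq_zero (show n - m + a - s < p by
          have := Finset.mem_range.not.mp hnp; omega), mul_zero])]
    simp only [Finset.mul_sum]
    apply Finset.sum_congr rfl
    intro p _
    have h1 : ((p : ℝ) + 1) ≠ 0 := by positivity
    have h2 : ((p : ℝ) + 1) ^ (k - (l : ℤ)) = ((p : ℝ) + 1) ^ k / ((p : ℝ) + 1) ^ l := by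
      rw [zpow_sub₀ h1, zpow_natCast]
    have hNf : (((n - m + a - s).factorial : ℝ)) ≠ 0 := by
      exact_mod_cast (n - m + a - s).factorial_ne_zero
    have hpf : ((p.factorial : ℝ)) ≠ 0 := by exact_mod_cast p.factorial_ne_zero
    have hzk : ((p : ℝ) + 1) ^ k ≠ 0 := zpow_ne_zero k h1
    rw [h2]
    field_simp
  rw [hLHS]
  calc ∑ p ∈ Finset.range (n + 1), ∑ a ∈ Finset.Icc 1 m,
        ∑ l ∈ Finset.range (a + 1), ∑ s ∈ Finset.range (n - m + a + 1),
          1 / ((p.factorial : ℝ) * ((p : ℝ) + 1) ^ k) * (((n - m).factorial : ℝ) *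
            ((S1 (a + 1) (l + 1) * ((p : ℝ) + 1) ^ l)
              * (S1 m a * ((-1 : ℝ) ^ s * ((m + s - 1).choose s : ℝ)
                  * PowerSeries.coeff (n - m + a - s) (Dlog⁻¹ ^ a * logSeries ^ p)))))
      = ∑ a ∈ Finset.Icc 1 m, ∑ l ∈ Finset.range (a + 1),
          ∑ s ∈ Finset.range (n - m + a + 1), ∑ p ∈ Finset.range (n + 1),
            1 / ((p.factorial : ℝ) * ((p : ℝ) + 1) ^ k) * (((n - m).factorial : ℝ) *
              ((S1 (a + 1) (l + 1) * ((p : ℝ) + 1) ^ l)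
                * (S1 m a * ((-1 : ℝ) ^ s * ((m + s - 1).choose s : ℝ)
                    * PowerSeries.coeff (n - m + a - s)
                        (Dlog⁻¹ ^ a * logSeries ^ p))))) := by
        rw [Finset.sum_comm]
        apply Finset.sum_congr rfl
        intro a _
        rw [Finset.sum_comm]
        apply Finset.sum_congr rfl
        intro l _
        rw [Finset.sum_comm]
    _ = ∑ a ∈ Finset.Icc 1 m, ∑ l ∈ Finset.range (a + 1),
          ∑ s ∈ Finset.range (n - m + a + 1),
            (-1 : ℝ) ^ s * ((m + s - 1).choose s : ℝ) *
              (((n - m).factorial : ℝ) / ((n - m + a - s).factorial : ℝ)) *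
              S1 m a * S1 (a + 1) (l + 1) * T a (k - l) (n - m + a - s) := by
        apply Finset.sum_congr rfl
        intro a ha
        apply Finset.sum_congr rfl
        intro l hl
        apply Finset.sum_congr rfl
        intro s hs
        exact (hstep a ha l hl s hs).symm
end

section
/- For every integer k, every integer r ≥ 0, and every integer n ≥ 0, the poly-Cauchy polynomial of the first kind expands in higher-order Bernoulli polynomials as C_n^(k)(x) = Σ_{m=0}^{n} { (-1)^m Σ_{l=0}^{n-m} Σ_{a=0}^{n-m-l} C(n, l+m) C(n-m-l, a) S₁(l+m, m) β_a^{(r)}(-r) C_{n-m-l-a}^{(k)} } B_m^{(r)}(x), where β_n^{(r)}(x) are Carlitz's polynomials and B_m^{(r)}(x) the Bernoulli polynomials of order r. -/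
open PowerSeries Finset

lemma coeff_pow_eq_zero {G : PowerSeries ℝ} (hG : constantCoeff G = 0)
    {m n : ℕ} (h : n < m) : coeff n (G ^ m) = 0 := by
  have hx : (X : PowerSeries ℝ) ^ m ∣ G ^ m :=
    pow_dvd_pow_of_dvd (X_dvd_iff.mpr hG) m
  exact (X_pow_dvd_iff.mp hx) n h

lemma coeff_psComp (F G : PowerSeries ℝ) (n : ℕ) :
    coeff n (psComp F G) = ∑ m ∈ range (n + 1),
      coeff m F * coeff n (G ^ m) := by
  simp [psComp]

lemma tri_sum (n : ℕ) (f : ℕ → ℕ → ℝ) :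
    ∑ s ∈ range (n+1), ∑ i ∈ range (s+1), f i (s - i)
      = ∑ i ∈ range (n+1), ∑ j ∈ range (n+1-i), f i j := by
  rw [Finset.sum_sigma', Finset.sum_sigma']
  refine Finset.sum_nbij' (fun x => ⟨x.2, x.1 - x.2⟩) (fun x => ⟨x.1 + x.2, x.1⟩)
    ?_ ?_ ?_ ?_ ?_
  · simp only [mem_sigma, mem_range, Sigma.forall]; omega
  · simp only [mem_sigma, mem_range, Sigma.forall]; omega
  · simp only [mem_sigma, mem_range, Sigma.forall]
    intro a b h; ext <;> simp <;> omega
  · simp only [mem_sigma, mem_range, Sigma.forall]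
    intro a b h; ext <;> simp <;> omega
  · simp only [mem_sigma, mem_range, Sigma.forall]
    intro a b h; simp

lemma coeff_psComp_mul {G : PowerSeries ℝ} (hG : constantCoeff G = 0)
    (F R : PowerSeries ℝ) (n : ℕ) :
    coeff n (psComp F G * R)
      = ∑ m ∈ range (n + 1), coeff m F * coeff n (G ^ m * R) := by
  rw [coeff_mul]
  have step1 : ∀ p ∈ antidiagonal n,
      coeff p.1 (psComp F G) * coeff p.2 R
        = ∑ m ∈ range (n + 1), coeff m F * coeff p.1 (G ^ m) * coeff p.2 R := by
    intro p hp
    have hp1 : p.1 ≤ n := by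
      rw [Finset.HasAntidiagonal.mem_antidiagonal] at hp; omega
    rw [coeff_psComp, ← Finset.sum_mul]
    congr 1
    apply Finset.sum_subset
    · intro m hm; rw [mem_range] at hm ⊢; omega
    · intro m _ hnot
      rw [mem_range, not_lt] at hnot
      rw [coeff_pow_eq_zero hG (by omega), mul_zero]
  rw [Finset.sum_congr rfl step1, Finset.sum_comm]
  refine Finset.sum_congr rfl fun m _ => ?_
  rw [coeff_mul, Finset.mul_sum]
  exact Finset.sum_congr rfl fun p _ => by ring

lemma psComp_mul {G : PowerSeries ℝ} (hG : constantCoeff G = 0)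
    (F₁ F₂ : PowerSeries ℝ) :
    psComp (F₁ * F₂) G = psComp F₁ G * psComp F₂ G := by
  ext n
  rw [coeff_psComp_mul hG]
  have : ∀ m ∈ range (n+1), coeff m F₁ * coeff n (G ^ m * psComp F₂ G)
      = ∑ j ∈ range (n+1), coeff m F₁ * coeff j F₂ * coeff n (G ^ (m + j)) := by
    intro m _
    rw [mul_comm (G ^ m), coeff_psComp_mul hG, Finset.mul_sum]
    refine Finset.sum_congr rfl fun j _ => ?_
    rw [← pow_add]
    ring_nf
  rw [Finset.sum_congr rfl this, coeff_psComp]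
  have lhs : ∑ s ∈ range (n+1), coeff s (F₁ * F₂) * coeff n (G ^ s)
      = ∑ s ∈ range (n+1), ∑ i ∈ range (s+1),
          coeff i F₁ * coeff (s - i) F₂ * coeff n (G ^ s) := by
    refine Finset.sum_congr rfl fun s _ => ?_
    rw [coeff_mul, Finset.Nat.sum_antidiagonal_eq_sum_range_succ_mk, Finset.sum_mul]
  rw [lhs]
  have lhs2 : ∑ s ∈ range (n+1), ∑ i ∈ range (s+1),
        coeff i F₁ * coeff (s - i) F₂ * coeff n (G ^ s)
      = ∑ s ∈ range (n+1), ∑ i ∈ range (s+1),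
          coeff i F₁ * coeff (s - i) F₂ * coeff n (G ^ (i + (s - i))) := by
    refine Finset.sum_congr rfl fun s _ => Finset.sum_congr rfl fun i hi => ?_
    rw [mem_range] at hi
    rw [Nat.add_sub_cancel' (by omega : i ≤ s)]
  rw [lhs2, tri_sum n (fun i j => coeff i F₁ * coeff j F₂ * coeff n (G ^ (i + j)))]
  refine Finset.sum_congr rfl fun m hm => ?_
  apply Finset.sum_subset
  · intro j hj; rw [mem_range] at hj ⊢; omega
  · intro j hj hnot
    rw [mem_range] at hj hnot
    rw [coeff_pow_eq_zero hG (show n < m + j by omega), mul_zero]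

lemma psComp_C (G : PowerSeries ℝ) (a : ℝ) : psComp (C a) G = C a := by
  ext n
  rw [coeff_psComp]
  rcases Nat.eq_zero_or_pos n with h | h
  · subst h; simp
  · have hz : ∀ m ∈ range (n+1), coeff m (C a) * coeff n (G ^ m) = 0 := by
      intro m _
      rcases eq_or_ne m 0 with rfl | hm
      · simp [h.ne']
      · simp [coeff_C, hm]
    rw [Finset.sum_eq_zero hz, coeff_C]
    simp [h.ne']

lemma psComp_one (G : PowerSeries ℝ) : psComp 1 G = 1 := by
  have := psComp_C G 1
  simpa using this

lemma psComp_pow {G : PowerSeries ℝ} (hG : constantCoeff G = 0)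
    (F : PowerSeries ℝ) (r : ℕ) :
    psComp (F ^ r) G = psComp F G ^ r := by
  induction r with
  | zero => simpa using psComp_one G
  | succ r ih => rw [pow_succ, pow_succ, psComp_mul hG, ih]

lemma constantCoeff_psComp (F G : PowerSeries ℝ) :
    constantCoeff (psComp F G) = constantCoeff F := by
  have h0 : coeff 0 (psComp F G) = coeff 0 F := by
    rw [coeff_psComp]; simp
  simpa [coeff_zero_eq_constantCoeff] using h0

lemma psComp_inv {G F : PowerSeries ℝ} (hG : constantCoeff G = 0)
    (hF : constantCoeff F ≠ 0) :
    psComp F⁻¹ G = (psComp F G)⁻¹ := by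
  have hmul : psComp F G * psComp F⁻¹ G = 1 := by
    rw [← psComp_mul hG, PowerSeries.mul_inv_cancel F hF, psComp_one]
  have hc : constantCoeff (psComp F G) ≠ 0 := by
    rw [constantCoeff_psComp]; exact hF
  rw [PowerSeries.eq_inv_iff_mul_eq_one hc]
  rw [mul_comm] at hmul
  exact hmul

lemma psComp_sub (G F₁ F₂ : PowerSeries ℝ) :
    psComp (F₁ - F₂) G = psComp F₁ G - psComp F₂ G := by
  ext n
  rw [map_sub, coeff_psComp, coeff_psComp, coeff_psComp, ← Finset.sum_sub_distrib]
  refine Finset.sum_congr rfl fun m _ => ?_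
  rw [map_sub, sub_mul]

lemma psComp_X {G : PowerSeries ℝ} (hG : constantCoeff G = 0) :
    psComp X G = G := by
  ext n
  rw [coeff_psComp]
  rcases Nat.eq_zero_or_pos n with h | h
  · subst h
    simp [coeff_zero_eq_constantCoeff, hG]
  · rw [Finset.sum_eq_single 1]
    · simp
    · intro m _ hm
      simp [coeff_X, hm]
    · intro hm
      rw [mem_range] at hm
      omega

lemma psComp_negG (F G : PowerSeries ℝ) :
    psComp F (-G) = psComp (rescale (-1 : ℝ) F) G := by
  ext n
  rw [coeff_psComp, coeff_psComp]
  refine Finset.sum_congr rfl fun m _ => ?_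
  rw [coeff_rescale]
  have : (-G) ^ m = ((-1 : ℝ) ^ m) • G ^ m := by
    rw [neg_pow, PowerSeries.smul_eq_C_mul, map_pow, map_neg, map_one]
  rw [this, map_smul, smul_eq_mul]
  ring

noncomputable def EA : PowerSeries ℝ :=
  PowerSeries.mk fun m => (1 : ℝ) / (m + 1).factorial

lemma constLog : constantCoeff logSeries = 0 := by
  rw [← coeff_zero_eq_constantCoeff]
  simp [logSeries]

lemma constNegLog : constantCoeff (-logSeries) = 0 := by
  rw [map_neg, constLog, neg_zero]

lemma X_mul_Dlog : X * Dlog = logSeries := by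
  ext n
  cases n with
  | zero => simp [logSeries]
  | succ n =>
    rw [coeff_succ_X_mul]
    simp only [Dlog, logSeries, coeff_mk, Nat.succ_ne_zero, if_false]
    push_cast
    rw [pow_succ, pow_succ]
    ring

lemma coeff_exp_real (m : ℕ) : coeff m (exp ℝ) = 1 / m.factorial := by
  rw [PowerSeries.coeff_exp]
  rw [map_div₀, map_one, map_natCast]

lemma X_mul_EA : X * EA = exp ℝ - 1 := by
  ext n
  cases n with
  | zero => simp [coeff_zero_eq_constantCoeff, constantCoeff_exp]
  | succ n =>
    rw [coeff_succ_X_mul, map_sub, coeff_exp_real]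
    simp [EA]

noncomputable def P (c : ℝ) : PowerSeries ℝ := psComp (rescale c (exp ℝ)) logSeries

lemma P_mul (a b : ℝ) : P a * P b = P (a + b) := by
  rw [P, P, P, ← psComp_mul constLog, PowerSeries.exp_mul_exp_eq_exp_add]

lemma P_zero : P 0 = 1 := by
  rw [P, rescale_zero]
  show psComp (C (constantCoeff (exp ℝ))) logSeries = 1
  rw [constantCoeff_exp, psComp_C, map_one]

noncomputable def Linv : PowerSeries ℝ := PowerSeries.mk fun n => (-1 : ℝ) ^ n

lemma deriv_log : d⁄dX ℝ logSeries = Linv := by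
  ext n
  rw [PowerSeries.coeff_derivative]
  simp only [logSeries, Linv, coeff_mk, Nat.succ_ne_zero, if_false]
  have h : ((n : ℝ) + 1) ≠ 0 := by positivity
  push_cast
  rw [pow_succ, pow_succ]
  field_simp

lemma one_add_X_mul_Linv : (1 + X) * Linv = 1 := by
  ext n
  rw [add_mul, one_mul, map_add]
  cases n with
  | zero => simp [Linv]
  | succ n =>
    rw [coeff_succ_X_mul]
    simp [Linv, pow_succ]

lemma chain_E : d⁄dX ℝ (psComp (exp ℝ) logSeries) = psComp (exp ℝ) logSeries * Linv := by
  ext n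
  rw [PowerSeries.coeff_derivative, coeff_psComp, coeff_psComp_mul constLog, Finset.sum_mul]
  have hterm : ∀ m : ℕ, coeff m (exp ℝ) * coeff (n+1) (logSeries ^ m) * ((n : ℝ)+1)
      = coeff m (exp ℝ) * ((m : ℝ) * coeff n (logSeries ^ (m-1) * Linv)) := by
    intro m
    rw [mul_assoc]
    congr 1
    calc coeff (n+1) (logSeries ^ m) * ((n : ℝ)+1)
        = coeff n (d⁄dX ℝ (logSeries ^ m)) := (PowerSeries.coeff_derivative _ _).symm
      _ = (m : ℝ) * coeff n (logSeries ^ (m-1) * Linv) := by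
          rw [Derivation.leibniz_pow, deriv_log, smul_eq_mul, map_nsmul, nsmul_eq_mul]
  rw [Finset.sum_congr rfl (fun m _ => hterm m), Finset.sum_range_succ']
  simp only [Nat.cast_zero, zero_mul, mul_zero, add_zero]
  refine Finset.sum_congr rfl fun j _ => ?_
  rw [coeff_exp_real, coeff_exp_real, Nat.add_sub_cancel, Nat.factorial_succ]
  have hj : ((j : ℝ) + 1) ≠ 0 := by positivity
  have hf : ((j.factorial : ℝ)) ≠ 0 := by
    exact_mod_cast Nat.factorial_ne_zero j
  push_cast
  field_simp

lemma P_one : P 1 = 1 + X := by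
  have hE : P 1 = psComp (exp ℝ) logSeries := by
    rw [P, rescale_one]; rfl
  rw [hE]
  set E := psComp (exp ℝ) logSeries with hEdef
  have ode : (1 + X) * d⁄dX ℝ E = E := by
    rw [chain_E, ← mul_assoc, mul_comm (1 + X) E, mul_assoc, one_add_X_mul_Linv, mul_one]
  have e0 : coeff 0 E = 1 := by
    rw [hEdef, coeff_psComp]
    simp [coeff_exp_real]
  have hrec : ∀ n : ℕ, coeff n (d⁄dX ℝ E) + coeff n (X * d⁄dX ℝ E) = coeff n E := by
    intro n
    conv_rhs => rw [← ode]
    rw [add_mul, one_mul, map_add]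
  have e1 : coeff 1 E = 1 := by
    have h := hrec 0
    rw [coeff_zero_X_mul, add_zero, PowerSeries.coeff_derivative, e0] at h
    simpa using h
  have erec : ∀ n : ℕ, coeff (n+2) E * ((n : ℝ)+2) + coeff (n+1) E * ((n : ℝ)+1)
      = coeff (n+1) E := by
    intro n
    have h := hrec (n+1)
    rw [coeff_succ_X_mul, PowerSeries.coeff_derivative, PowerSeries.coeff_derivative] at h
    push_cast at h ⊢
    linarith
  have ezero : ∀ n : ℕ, coeff (n+2) E = 0 := by
    intro n
    induction n with
    | zero =>
      have h := erec 0
      rw [e1] at h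
      have h2 : coeff (0+2) E * 2 = 0 := by push_cast at h ⊢; linarith
      linarith
    | succ n ih =>
      have h := erec (n+1)
      rw [ih] at h
      have h2 : coeff (n+1+2) E * ((n : ℝ)+1+2) = 0 := by push_cast at h ⊢; linarith
      rcases mul_eq_zero.mp h2 with h3 | h3
      · exact h3
      · exfalso; nlinarith
  ext n
  match n with
  | 0 => rw [e0]; simp
  | 1 => rw [e1]; simp
  | (n+2) =>
    rw [ezero]
    rw [map_add, coeff_one, coeff_X]
    simp

lemma constEA : constantCoeff EA ≠ 0 := by
  rw [← coeff_zero_eq_constantCoeff]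
  simp [EA]

lemma constDlog : constantCoeff Dlog ≠ 0 := by
  rw [← coeff_zero_eq_constantCoeff]
  simp [Dlog]

noncomputable def Aser : PowerSeries ℝ := psComp EA (-logSeries)

lemma Aser_mul_Dlog : Aser * Dlog = P (-1) := by
  have h1 : psComp (X * EA) (-logSeries) = psComp X (-logSeries) * Aser :=
    psComp_mul constNegLog _ _
  have h2 : psComp X (-logSeries) = -logSeries := psComp_X constNegLog
  have h4 : psComp (exp ℝ) (-logSeries) = P (-1) := by
    rw [psComp_negG, P]
  have h3 : psComp (exp ℝ - 1) (-logSeries) = P (-1) - 1 := by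
    rw [psComp_sub, psComp_one, h4]
  have h5 : -logSeries * Aser = P (-1) - 1 := by
    rw [← h2, ← h1, X_mul_EA, h3]
  have h7 : X * (Aser * Dlog) = 1 - P (-1) := by
    rw [show X * (Aser * Dlog) = (X * Dlog) * Aser by ring, X_mul_Dlog]
    linear_combination -h5
  have h9 : P (-1) * (1 + X) = 1 := by
    rw [← P_one, P_mul]
    norm_num [P_zero]
  have h8 : X * P (-1) = 1 - P (-1) := by linear_combination h9
  exact mul_left_cancel₀ PowerSeries.X_ne_zero (h7.trans h8.symm)

lemma P_neg_nat (r : ℕ) : P (-(r : ℝ)) = P (-1) ^ r := by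
  induction r with
  | zero => simpa using P_zero
  | succ r ih =>
    rw [pow_succ, ← ih, P_mul, show (-(r:ℝ)) + -1 = -((r:ℕ)+1 : ℝ) by ring]
    push_cast
    ring_nf

lemma key_series (r : ℕ) (x : ℝ) :
    psComp (rescale (-x) (exp ℝ)) logSeries
      = psComp (EA⁻¹ ^ r * rescale x (exp ℝ)) (-logSeries)
        * (Dlog⁻¹ ^ r * psComp (rescale (-(r : ℝ)) (exp ℝ)) logSeries) := by
  have hresc : psComp (rescale x (exp ℝ)) (-logSeries) = P (-x) := by
    rw [psComp_negG, rescale_rescale, show x * (-1 : ℝ) = -x by ring]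
    rfl
  have hQ : psComp (EA⁻¹ ^ r * rescale x (exp ℝ)) (-logSeries)
      = (Aser⁻¹) ^ r * P (-x) := by
    rw [psComp_mul constNegLog, psComp_pow constNegLog,
      psComp_inv constNegLog constEA, hresc]
    rfl
  have hP : psComp (rescale (-(r : ℝ)) (exp ℝ)) logSeries = P (-(r : ℝ)) := rfl
  have hcA : constantCoeff Aser ≠ 0 := by
    rw [Aser, constantCoeff_psComp]; exact constEA
  have hAinv : Aser * Aser⁻¹ = 1 := PowerSeries.mul_inv_cancel _ hcA
  have hDinv : Dlog * Dlog⁻¹ = 1 := PowerSeries.mul_inv_cancel _ constDlog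
  have unit : Aser⁻¹ * Dlog⁻¹ * P (-1) = 1 := by
    calc Aser⁻¹ * Dlog⁻¹ * P (-1) = Aser⁻¹ * Dlog⁻¹ * (Aser * Dlog) := by
          rw [Aser_mul_Dlog]
      _ = (Aser * Aser⁻¹) * (Dlog * Dlog⁻¹) := by ring
      _ = 1 := by rw [hAinv, hDinv, one_mul]
  rw [hQ, hP, P_neg_nat]
  show P (-x) = Aser⁻¹ ^ r * P (-x) * (Dlog⁻¹ ^ r * P (-1) ^ r)
  calc P (-x) = (Aser⁻¹ * Dlog⁻¹ * P (-1)) ^ r * P (-x) := by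
        rw [unit, one_pow, one_mul]
    _ = Aser⁻¹ ^ r * P (-x) * (Dlog⁻¹ ^ r * P (-1) ^ r) := by
        rw [mul_pow, mul_pow]; ring

lemma pC0 (k : ℤ) (j : ℕ) :
    polyCauchy k j 0 = (j.factorial : ℝ) * coeff j (psComp (Lif k) logSeries) := by
  rw [polyCauchy]
  have h1 : psComp (rescale (-(0:ℝ)) (exp ℝ)) logSeries = 1 := by
    rw [neg_zero]
    exact P_zero
  rw [h1, mul_one]

lemma sum_shift (n m : ℕ) (hm : m ≤ n) (g : ℕ → ℝ) (hg : ∀ p, p < m → g p = 0) :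
    ∑ p ∈ range (n+1), g p = ∑ l ∈ range (n - m + 1), g (m + l) := by
  have h1 : ∑ l ∈ range (n - m + 1), g (m + l) = ∑ p ∈ Ico m (n+1), g p := by
    rw [Finset.sum_Ico_eq_sum_range, show n + 1 - m = n - m + 1 by omega]
  rw [h1, range_eq_Ico]
  symm
  apply Finset.sum_subset
  · intro p hp
    rw [Finset.mem_Ico] at hp ⊢
    omega
  · intro p hp hnp
    rw [Finset.mem_Ico] at hp hnp
    exact hg p (by omega)

lemma scalar_step (k : ℤ) (r n m l a : ℕ) (x : ℝ)
    (hm : m ≤ n) (hl : l ≤ n - m) (ha : a ≤ n - m - l) :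
    (n.factorial : ℝ) * coeff m (EA⁻¹ ^ r * rescale x (exp ℝ)) * (-1) ^ m
        * coeff (m + l) (logSeries ^ m)
        * coeff a (Dlog⁻¹ ^ r * psComp (rescale (-(r : ℝ)) (exp ℝ)) logSeries)
        * coeff (n - m - l - a) (psComp (Lif k) logSeries)
      = (-1 : ℝ) ^ m *
          ((n.choose (l + m) : ℝ) * ((n - m - l).choose a : ℝ) *
            S1 (l + m) m * carlitz r a (-(r : ℝ)) * polyCauchy k (n - m - l - a) 0) *
          ((m.factorial : ℝ) * coeff m (EA⁻¹ ^ r * rescale x (exp ℝ))) := by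
  have hS : S1 (l + m) m
      = ((l + m).factorial : ℝ) / (m.factorial : ℝ) * coeff (l + m) (logSeries ^ m) := rfl
  have hC : carlitz r a (-(r : ℝ))
      = (a.factorial : ℝ) * coeff a
          (Dlog⁻¹ ^ r * psComp (rescale (-(r : ℝ)) (exp ℝ)) logSeries) := rfl
  rw [hS, hC, pC0]
  rw [Nat.cast_choose ℝ (show l + m ≤ n by omega),
    Nat.cast_choose ℝ (show a ≤ n - m - l by omega)]
  rw [show m + l = l + m by omega, show n - (l + m) = n - m - l by omega]
  have f1 : ((m.factorial : ℝ)) ≠ 0 := by exact_mod_cast Nat.factorial_ne_zero m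
  have f2 : (((l + m).factorial : ℝ)) ≠ 0 := by exact_mod_cast Nat.factorial_ne_zero _
  have f3 : (((n - m - l).factorial : ℝ)) ≠ 0 := by exact_mod_cast Nat.factorial_ne_zero _
  have f4 : ((a.factorial : ℝ)) ≠ 0 := by exact_mod_cast Nat.factorial_ne_zero a
  have f5 : (((n - m - l - a).factorial : ℝ)) ≠ 0 := by exact_mod_cast Nat.factorial_ne_zero _
  field_simp

/-- Theorem 8 of the paper. -/
theorem polyCauchy_eq_bernoulli_poly_expansion (k : ℤ) (r : ℕ) (n : ℕ) (x : ℝ) :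
    polyCauchy k n x =
      ∑ m ∈ Finset.range (n + 1),
        ((-1 : ℝ) ^ m *
          ∑ l ∈ Finset.range (n - m + 1), ∑ a ∈ Finset.range (n - m - l + 1),
            (n.choose (l + m) : ℝ) * ((n - m - l).choose a : ℝ) *
              S1 (l + m) m * carlitz r a (-(r : ℝ)) * polyCauchy k (n - m - l - a) 0) *
        bernPoly r m x := by
  have lhs1 : polyCauchy k n x
      = (n.factorial : ℝ) * coeff n
          (psComp (EA⁻¹ ^ r * rescale x (exp ℝ)) (-logSeries)
            * ((Dlog⁻¹ ^ r * psComp (rescale (-(r : ℝ)) (exp ℝ)) logSeries)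
               * psComp (Lif k) logSeries)) := by
    rw [polyCauchy, key_series r x]
    congr 1
    ring
  rw [lhs1, coeff_psComp_mul constNegLog, Finset.mul_sum]
  refine Finset.sum_congr rfl fun m hm => ?_
  rw [mem_range] at hm
  have hm' : m ≤ n := by omega
  have hbern : bernPoly r m x
      = (m.factorial : ℝ) * coeff m (EA⁻¹ ^ r * rescale x (exp ℝ)) := rfl
  have hneg : coeff n ((-logSeries) ^ m *
        ((Dlog⁻¹ ^ r * psComp (rescale (-(r : ℝ)) (exp ℝ)) logSeries) * psComp (Lif k) logSeries))
      = (-1 : ℝ) ^ m * coeff n (logSeries ^ m *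
        ((Dlog⁻¹ ^ r * psComp (rescale (-(r : ℝ)) (exp ℝ)) logSeries) * psComp (Lif k) logSeries)) := by
    have hC : (-logSeries) ^ m *
          ((Dlog⁻¹ ^ r * psComp (rescale (-(r : ℝ)) (exp ℝ)) logSeries) * psComp (Lif k) logSeries)
        = C ((-1 : ℝ) ^ m) * (logSeries ^ m *
          ((Dlog⁻¹ ^ r * psComp (rescale (-(r : ℝ)) (exp ℝ)) logSeries) * psComp (Lif k) logSeries)) := by
      rw [neg_pow, map_pow, map_neg, map_one]; ring
    rw [hC, coeff_C_mul]
  have hexp : coeff n (logSeries ^ m *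
        ((Dlog⁻¹ ^ r * psComp (rescale (-(r : ℝ)) (exp ℝ)) logSeries) * psComp (Lif k) logSeries))
      = ∑ l ∈ range (n - m + 1), coeff (m + l) (logSeries ^ m) *
          coeff (n - (m + l))
            ((Dlog⁻¹ ^ r * psComp (rescale (-(r : ℝ)) (exp ℝ)) logSeries) * psComp (Lif k) logSeries) := by
    rw [coeff_mul, Finset.Nat.sum_antidiagonal_eq_sum_range_succ_mk]
    exact sum_shift n m hm' _ (fun p hp => by rw [coeff_pow_eq_zero constLog hp, zero_mul])
  have hCL : ∀ q : ℕ, coeff q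
        ((Dlog⁻¹ ^ r * psComp (rescale (-(r : ℝ)) (exp ℝ)) logSeries) * psComp (Lif k) logSeries)
      = ∑ a ∈ range (q + 1),
          coeff a (Dlog⁻¹ ^ r * psComp (rescale (-(r : ℝ)) (exp ℝ)) logSeries) *
            coeff (q - a) (psComp (Lif k) logSeries) := by
    intro q
    rw [coeff_mul, Finset.Nat.sum_antidiagonal_eq_sum_range_succ_mk]
  rw [hbern, hneg, hexp]
  simp only [hCL]
  simp only [Nat.sub_sub]
  simp only [Finset.mul_sum, Finset.sum_mul]
  refine Finset.sum_congr rfl fun l hl => ?_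
  rw [mem_range] at hl
  refine Finset.sum_congr rfl fun a ha => ?_
  rw [mem_range] at ha
  have SS := scalar_step k r n m l a x hm' (by omega) (by omega)
  simp only [Nat.sub_sub] at SS
  linear_combination SS
end
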